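/- Let κ ≥ 4 and let h : [0, π] → ℝ be continuously differentiable on [0, π] and twice differentiable on (0, π), solving the profile equation h''(θ) + (cos θ / sin θ)·h'(θ) − sin(2h(θ))/(2 sin²θ) − (κ/2)·sin(2h(θ) − 2θ) = 0 on (0, π). Assume h(0) = h(π) = π, h(θ) + h(π − θ) = 2π for all θ ∈ [0, π], and π ≤ h(θ) ≤ π + θ for all θ ∈ [0, π/2]. Then (i) the function θ ↦ π + θ − h(θ) is monotonically increasing on [0, π], and (ii) the function θ ↦ sin²(h(θ) − θ)·sin θ is monotonically increasing on [0, π/2] and monotonically decreasing on [π/2, π]. -/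

import Mathlib

open Real Set

/-- Key trigonometric inequality for the first wedge condition. -/
lemma mono_first_key_ineq (κ θ a : ℝ) (hκ : 4 ≤ κ) (hθ0 : 0 ≤ θ) (hθ : θ ≤ π / 2)
    (ha0 : 0 ≤ a) (ha : a ≤ θ) :
    0 ≤ Real.sin (2 * θ) - Real.sin (2 * a) + κ * Real.sin θ ^ 2 * Real.sin (2 * θ - 2 * a) := by
  have hπ := Real.pi_pos
  set x := θ - a with hxdef
  have hx0 : 0 ≤ x := by simp only [hxdef]; linarith
  have hsθ : 0 ≤ Real.sin θ := Real.sin_nonneg_of_nonneg_of_le_pi hθ0 (by linarith)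
  have hcθ : 0 ≤ Real.cos θ := Real.cos_nonneg_of_mem_Icc ⟨by linarith, hθ⟩
  have hsx : 0 ≤ Real.sin x := Real.sin_nonneg_of_nonneg_of_le_pi hx0 (by simp only [hxdef]; linarith)
  have hcx : 0 ≤ Real.cos x := Real.cos_nonneg_of_mem_Icc ⟨by linarith, by simp only [hxdef]; linarith⟩
  have e1 : 2 * a = 2 * θ - 2 * x := by simp only [hxdef]; ring
  have e2 : 2 * θ - 2 * a = 2 * x := by simp only [hxdef]; ring
  rw [e2, e1, Real.sin_sub (2 * θ) (2 * x), Real.sin_two_mul θ, Real.sin_two_mul x,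
    Real.cos_two_mul x, Real.cos_two_mul θ]
  have p1 := Real.sin_sq_add_cos_sq x
  have p2 := Real.sin_sq_add_cos_sq θ
  have hEeq : 2 * Real.sin θ * Real.cos θ
      - (2 * Real.sin θ * Real.cos θ * (2 * Real.cos x ^ 2 - 1)
        - (2 * Real.cos θ ^ 2 - 1) * (2 * Real.sin x * Real.cos x))
      + κ * Real.sin θ ^ 2 * (2 * Real.sin x * Real.cos x)
      = 4 * Real.sin θ * Real.cos θ * Real.sin x ^ 2
        + 2 * Real.sin x * Real.cos x
        + 4 * Real.sin θ ^ 2 * Real.sin x * Real.cos x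
        + 2 * (κ - 4) * Real.sin θ ^ 2 * Real.sin x * Real.cos x := by
    linear_combination (-4 * Real.sin θ * Real.cos θ) * p1 + (4 * Real.sin x * Real.cos x) * p2
  rw [hEeq]
  have q1 : 0 ≤ 4 * Real.sin θ * Real.cos θ * Real.sin x ^ 2 := by positivity
  have q2 : 0 ≤ 2 * Real.sin x * Real.cos x := by positivity
  have q3 : 0 ≤ 4 * Real.sin θ ^ 2 * Real.sin x * Real.cos x := by positivity
  have q4 : 0 ≤ 2 * (κ - 4) * Real.sin θ ^ 2 * Real.sin x * Real.cos x := by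
    have : 0 ≤ κ - 4 := by linarith
    positivity
  linarith

/-- For a hemispheric critical profile of type (1,1) satisfying the first wedge
    condition (κ ≥ 4): θ ↦ π + θ − h(θ) is increasing on [0,π], and
    θ ↦ sin²(h(θ) − θ)·sin θ is increasing on [0,π/2] and decreasing on [π/2,π]. -/
theorem monotonicity_first_type (κ : ℝ) (hκ : 4 ≤ κ) (h : ℝ → ℝ)
    (hC1 : ContDiffOn ℝ 1 h (Set.Icc 0 π))
    (hC2 : ∀ θ ∈ Set.Ioo (0 : ℝ) π, DifferentiableAt ℝ (deriv h) θ)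
    (heq : ∀ θ ∈ Set.Ioo (0 : ℝ) π,
      deriv (deriv h) θ + (Real.cos θ / Real.sin θ) * deriv h θ
        - Real.sin (2 * h θ) / (2 * Real.sin θ ^ 2)
        - (κ / 2) * Real.sin (2 * h θ - 2 * θ) = 0)
    (h0 : h 0 = π) (hπ : h π = π)
    (hsym : ∀ θ ∈ Set.Icc (0 : ℝ) π, h θ + h (π - θ) = 2 * π)
    (hwedge : ∀ θ ∈ Set.Icc (0 : ℝ) (π / 2), π ≤ h θ ∧ h θ ≤ π + θ) :
    MonotoneOn (fun θ => π + θ - h θ) (Set.Icc 0 π) ∧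
    MonotoneOn (fun θ => Real.sin (h θ - θ) ^ 2 * Real.sin θ) (Set.Icc 0 (π / 2)) ∧
    AntitoneOn (fun θ => Real.sin (h θ - θ) ^ 2 * Real.sin θ) (Set.Icc (π / 2) π) := by
  have hπpos := Real.pi_pos
  have hIcc_mem : ∀ θ ∈ Set.Ioo (0 : ℝ) π, Set.Icc (0 : ℝ) π ∈ nhds θ := fun θ ht =>
    Icc_mem_nhds ht.1 ht.2
  have hdiff : ∀ θ ∈ Set.Ioo (0 : ℝ) π, DifferentiableAt ℝ h θ := fun θ ht =>
    (hC1.differentiableOn one_ne_zero).differentiableAt (hIcc_mem θ ht)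
  have hdw : ∀ θ ∈ Set.Ioo (0 : ℝ) π, derivWithin h (Set.Icc 0 π) θ = deriv h θ := fun θ ht =>
    derivWithin_of_mem_nhds (hIcc_mem θ ht)
  set G : ℝ → ℝ := fun θ => Real.sin θ * (1 - derivWithin h (Set.Icc 0 π) θ) with hGdef
  have hGcont : ContinuousOn G (Set.Icc 0 π) :=
    Real.continuous_sin.continuousOn.mul
      (continuousOn_const.sub (hC1.continuousOn_derivWithin (uniqueDiffOn_Icc hπpos) le_rfl))
  have hG0 : G 0 = 0 := by simp [hGdef]
  have hGderiv : ∀ θ ∈ Set.Ioo (0 : ℝ) π, HasDerivAt G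
      (Real.cos θ * (1 - deriv h θ) + Real.sin θ * (0 - deriv (deriv h) θ)) θ := by
    intro θ ht
    have hF : HasDerivAt (fun t => Real.sin t * (1 - deriv h t))
        (Real.cos θ * (1 - deriv h θ) + Real.sin θ * (0 - deriv (deriv h) θ)) θ :=
      (Real.hasDerivAt_sin θ).mul ((hasDerivAt_const θ (1 : ℝ)).sub ((hC2 θ ht).hasDerivAt))
    apply hF.congr_of_eventuallyEq
    filter_upwards [isOpen_Ioo.mem_nhds ht] with t htI
    simp only [hGdef, hdw t htI]
  have hGd_nonneg : ∀ θ ∈ Set.Ioo (0 : ℝ) (π / 2), 0 ≤ deriv G θ := by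
    intro θ ht
    have htπ : θ ∈ Set.Ioo (0 : ℝ) π := ⟨ht.1, by linarith [ht.2]⟩
    rw [(hGderiv θ htπ).deriv]
    have hsin : 0 < Real.sin θ := Real.sin_pos_of_pos_of_lt_pi ht.1 htπ.2
    have heqθ := heq θ htπ
    have hdd : deriv (deriv h) θ = Real.sin (2 * h θ) / (2 * Real.sin θ ^ 2)
        + (κ / 2) * Real.sin (2 * h θ - 2 * θ) - (Real.cos θ / Real.sin θ) * deriv h θ := by
      linarith
    rw [hdd]
    have hw := hwedge θ ⟨le_of_lt ht.1, le_of_lt ht.2⟩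
    set a := h θ - π with hadef
    have ha0 : 0 ≤ a := by simp only [hadef]; linarith [hw.1]
    have ha1 : a ≤ θ := by simp only [hadef]; linarith [hw.2]
    have hsin2h : Real.sin (2 * h θ) = Real.sin (2 * a) := by
      rw [show 2 * h θ = 2 * a + 2 * π by simp only [hadef]; ring, Real.sin_add_two_pi]
    have hsin2hθ : Real.sin (2 * h θ - 2 * θ) = -Real.sin (2 * θ - 2 * a) := by
      rw [show 2 * h θ - 2 * θ = -(2 * θ - 2 * a) + 2 * π by simp only [hadef]; ring,
        Real.sin_add_two_pi, Real.sin_neg]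
    rw [hsin2h, hsin2hθ]
    have key := mono_first_key_ineq κ θ a hκ (le_of_lt ht.1) (le_of_lt ht.2) ha0 ha1
    have hexp : Real.cos θ * (1 - deriv h θ)
        + Real.sin θ * (0 - (Real.sin (2 * a) / (2 * Real.sin θ ^ 2)
            + κ / 2 * -Real.sin (2 * θ - 2 * a) - Real.cos θ / Real.sin θ * deriv h θ))
        = (Real.sin (2 * θ) - Real.sin (2 * a)
            + κ * Real.sin θ ^ 2 * Real.sin (2 * θ - 2 * a)) / (2 * Real.sin θ) := by
      rw [Real.sin_two_mul θ]
      field_simp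
      ring
    rw [hexp]
    exact div_nonneg key (by positivity)
  have hGmono : MonotoneOn G (Set.Icc 0 (π / 2)) := by
    apply monotoneOn_of_deriv_nonneg (convex_Icc _ _)
      (hGcont.mono (Icc_subset_Icc le_rfl (by linarith)))
    · intro x hx
      rw [interior_Icc] at hx
      exact ((hGderiv x ⟨hx.1, by linarith [hx.2]⟩).differentiableAt).differentiableWithinAt
    · intro x hx
      rw [interior_Icc] at hx
      exact hGd_nonneg x hx
  have hd_le_half : ∀ θ ∈ Set.Ioo (0 : ℝ) π, θ ≤ π / 2 → deriv h θ ≤ 1 := by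
    intro θ ht hhalf
    have hGθ : 0 ≤ G θ := by
      have := hGmono ⟨le_refl 0, by linarith⟩ ⟨le_of_lt ht.1, hhalf⟩ (le_of_lt ht.1)
      rwa [hG0] at this
    have hsin : 0 < Real.sin θ := Real.sin_pos_of_pos_of_lt_pi ht.1 ht.2
    have hGval : G θ = Real.sin θ * (1 - deriv h θ) := by
      simp only [hGdef, hdw θ ht]
    rw [hGval] at hGθ
    nlinarith
  have hd_le : ∀ θ ∈ Set.Ioo (0 : ℝ) π, deriv h θ ≤ 1 := by
    intro θ ht
    by_cases hc : θ ≤ π / 2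
    · exact hd_le_half θ ht hc
    · push_neg at hc
      have hs : π - θ ∈ Set.Ioo (0 : ℝ) π := ⟨by linarith [ht.2], by linarith [ht.1]⟩
      have hds : deriv h θ = deriv h (π - θ) := by
        have h1 : HasDerivAt (fun t : ℝ => π - t) (-1) θ := (hasDerivAt_id θ).const_sub π
        have h2 : HasDerivAt (fun t : ℝ => h (π - t)) (deriv h (π - θ) * (-1)) θ :=
          ((hdiff _ hs).hasDerivAt).comp θ h1
        have h3 := h2.const_sub (2 * π)
        have hder : HasDerivAt (fun t : ℝ => 2 * π - h (π - t)) (deriv h (π - θ)) θ := by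
          exact h3.congr_deriv (by ring)
        have hev : h =ᶠ[nhds θ] fun t => 2 * π - h (π - t) := by
          filter_upwards [isOpen_Ioo.mem_nhds ht] with t htI
          have := hsym t (Ioo_subset_Icc_self htI)
          linarith
        exact (hder.congr_of_eventuallyEq hev).deriv
      rw [hds]
      exact hd_le_half _ hs (by linarith)
  have part1 : MonotoneOn (fun θ => π + θ - h θ) (Set.Icc 0 π) := by
    apply monotoneOn_of_deriv_nonneg (convex_Icc _ _)
      ((continuousOn_const.add continuousOn_id).sub hC1.continuousOn)
    · intro x hx
      rw [interior_Icc] at hx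
      exact (((hasDerivAt_id x).const_add π).sub
        (hdiff x hx).hasDerivAt).differentiableAt.differentiableWithinAt
    · intro x hx
      rw [interior_Icc] at hx
      have hw : HasDerivAt (fun θ => π + θ - h θ) (1 - deriv h x) x := by
        have := ((hasDerivAt_id x).const_add π).sub (hdiff x hx).hasDerivAt
        exact this
      show 0 ≤ deriv (fun θ => π + θ - h θ) x
      rw [hw.deriv]
      linarith [hd_le x hx]
  have part2 : MonotoneOn (fun θ => Real.sin (h θ - θ) ^ 2 * Real.sin θ)
      (Set.Icc 0 (π / 2)) := by
    apply monotoneOn_of_deriv_nonneg (convex_Icc _ _)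
    · exact ((Real.continuous_sin.comp_continuousOn
        ((hC1.continuousOn.mono (Icc_subset_Icc le_rfl (by linarith))).sub
          continuousOn_id)).pow 2).mul Real.continuous_sin.continuousOn
    · intro x hx
      rw [interior_Icc] at hx
      have hxπ : x ∈ Set.Ioo (0 : ℝ) π := ⟨hx.1, by linarith [hx.2]⟩
      have hu : HasDerivAt (fun t => h t - t) (deriv h x - 1) x :=
        (hdiff x hxπ).hasDerivAt.sub (hasDerivAt_id x)
      have hsin : HasDerivAt (fun t => Real.sin (h t - t))
          (Real.cos (h x - x) * (deriv h x - 1)) x := hu.sin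
      exact ((hsin.pow 2).mul (Real.hasDerivAt_sin x)).differentiableAt.differentiableWithinAt
    · intro x hx
      rw [interior_Icc] at hx
      have hxπ : x ∈ Set.Ioo (0 : ℝ) π := ⟨hx.1, by linarith [hx.2]⟩
      have hu : HasDerivAt (fun t => h t - t) (deriv h x - 1) x :=
        (hdiff x hxπ).hasDerivAt.sub (hasDerivAt_id x)
      have hsin : HasDerivAt (fun t => Real.sin (h t - t))
          (Real.cos (h x - x) * (deriv h x - 1)) x := hu.sin
      have hQ : HasDerivAt (fun t => Real.sin (h t - t) ^ 2 * Real.sin t)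
          ((2 : ℕ) * Real.sin (h x - x) ^ (2 - 1) * (Real.cos (h x - x) * (deriv h x - 1))
              * Real.sin x + Real.sin (h x - x) ^ 2 * Real.cos x) x :=
        (hsin.pow 2).mul (Real.hasDerivAt_sin x)
      rw [hQ.deriv]
      have hw := hwedge x ⟨le_of_lt hx.1, le_of_lt hx.2⟩
      have hsu : 0 ≤ Real.sin (h x - x) :=
        Real.sin_nonneg_of_nonneg_of_le_pi (by linarith [hw.1, hx.2]) (by linarith [hw.2])
      have hcu : Real.cos (h x - x) ≤ 0 :=
        Real.cos_nonpos_of_pi_div_two_le_of_le (by linarith [hw.1, hx.2]) (by linarith [hw.2])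
      have hsx : 0 ≤ Real.sin x :=
        Real.sin_nonneg_of_nonneg_of_le_pi (le_of_lt hx.1) (by linarith [hx.2])
      have hcx : 0 ≤ Real.cos x := Real.cos_nonneg_of_mem_Icc ⟨by linarith [hx.1], le_of_lt hx.2⟩
      have hd1 : deriv h x - 1 ≤ 0 := by linarith [hd_le x hxπ]
      have ht1 : 0 ≤ Real.cos (h x - x) * (deriv h x - 1) := by nlinarith
      have ht2 : 0 ≤ (2 : ℕ) * Real.sin (h x - x) ^ (2 - 1)
          * (Real.cos (h x - x) * (deriv h x - 1)) * Real.sin x := by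
        apply mul_nonneg (mul_nonneg (by positivity) ht1) hsx
      nlinarith [mul_nonneg (sq_nonneg (Real.sin (h x - x))) hcx]
  have hQsym : ∀ θ ∈ Set.Icc (π / 2) π,
      Real.sin (h θ - θ) ^ 2 * Real.sin θ
        = Real.sin (h (π - θ) - (π - θ)) ^ 2 * Real.sin (π - θ) := by
    intro θ hθ
    have hmem : π - θ ∈ Set.Icc (0 : ℝ) π := ⟨by linarith [hθ.2], by linarith [hθ.1]⟩
    have hs := hsym (π - θ) hmem
    rw [show π - (π - θ) = θ by ring] at hs
    have e1 : Real.sin (h θ - θ) = Real.sin (h (π - θ) - (π - θ)) := by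
      rw [show h θ - θ = π - (h (π - θ) - (π - θ)) by linarith, Real.sin_pi_sub]
    rw [e1, Real.sin_pi_sub]
  refine ⟨part1, part2, ?_⟩
  intro a ha b hb hab
  show Real.sin (h b - b) ^ 2 * Real.sin b ≤ Real.sin (h a - a) ^ 2 * Real.sin a
  rw [hQsym a ha, hQsym b hb]
  exact part2 ⟨by linarith [hb.2], by linarith [hb.1]⟩
    ⟨by linarith [ha.2], by linarith [ha.1]⟩ (by linarith)
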